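/- Let g ≥ 2 be an integer and define Z : (0,∞) → ℝ by Z(ε) = (2π²)^{1−g} · Σ_{n=1}^{∞} e^{−επ²n²}/n^{2g−2}. Then Z is (g−1)-times differentiable on (0,∞) and for every ε > 0 its (g−1)-st derivative satisfies Z^{(g−1)}(ε) = (−1)^{g−1} · 2^{1−g} · ( 1/(2√(πε)) − 1/2 + (1/√(πε)) · Σ_{n=1}^{∞} e^{−n²/ε} ). -/

import Mathlib

open Real


lemma aux_summable {c : ℝ} (hc : 0 < c) (j m : ℕ) :
    Summable fun n : ℕ => ((n:ℝ)+1)^j * Real.exp (-(c*((n:ℝ)+1)^2)) / ((n:ℝ)+1)^m := by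
  have h1 : Summable fun n : ℕ => ((n:ℝ)+1)^j * Real.exp (-c*((n:ℝ)+1)) := by
    have h0 := Real.summable_pow_mul_exp_neg_nat_mul j hc
    have h2 := (summable_nat_add_iff 1).2 h0
    refine h2.congr fun n => ?_
    push_cast
    ring_nf
  refine h1.of_nonneg_of_le (fun n => by positivity) (fun n => ?_)
  have hn1 : (1:ℝ) ≤ (n:ℝ)+1 := by
    have : (0:ℝ) ≤ n := Nat.cast_nonneg n
    linarith
  have hb : (1:ℝ) ≤ ((n:ℝ)+1)^m := one_le_pow₀ hn1
  have hexp : Real.exp (-(c*((n:ℝ)+1)^2)) ≤ Real.exp (-c*((n:ℝ)+1)) := by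
    apply Real.exp_le_exp.2
    have : ((n:ℝ)+1) ≤ ((n:ℝ)+1)^2 := le_self_pow₀ hn1 two_ne_zero
    nlinarith
  calc ((n:ℝ)+1)^j * Real.exp (-(c*((n:ℝ)+1)^2)) / ((n:ℝ)+1)^m
      ≤ ((n:ℝ)+1)^j * Real.exp (-(c*((n:ℝ)+1)^2)) := by
        apply div_le_self (by positivity) hb
    _ ≤ ((n:ℝ)+1)^j * Real.exp (-c*((n:ℝ)+1)) := by
        apply mul_le_mul_of_nonneg_left hexp (by positivity)

-- summability of the k-th derivative series at a point ε>0, in exact form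
lemma aux_summable2 {ε : ℝ} (hε : 0 < ε) (k m : ℕ) :
    Summable fun n : ℕ => (π^2*((n:ℝ)+1)^2)^k *
      (Real.exp (-ε*π^2*((n:ℝ)+1)^2) / ((n:ℝ)+1)^m) := by
  have hc : 0 < ε * π^2 := by positivity
  have := (aux_summable hc (2*k) m).mul_left ((π^2)^k)
  refine this.congr fun n => ?_
  rw [mul_pow, pow_mul, show -(ε * π^2 * ((n:ℝ)+1)^2) = -ε * π^2 * ((n:ℝ)+1)^2 from by ring]
  ring

/-- For Z(ε) = (2π²)^{1−g} Σ_{n≥1} e^{−επ²n²}/n^{2g−2} on (0,∞), Z is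
(g−1)-times differentiable on (0,∞) (witnessed by a chain D of successive derivatives)
and Z^{(g−1)}(ε) = (−1)^{g−1} 2^{1−g} (1/(2√(πε)) − 1/2 + (1/√(πε)) Σ_{n≥1} e^{−n²/ε}). -/
theorem stmt11 (g : ℕ) (hg : 2 ≤ g) :
    ∃ D : ℕ → ℝ → ℝ,
      (D 0 = fun ε => (2 * π ^ 2) ^ ((1 : ℤ) - g) *
        ∑' n : ℕ, Real.exp (-ε * π ^ 2 * ((n : ℝ) + 1) ^ 2) /
          ((n : ℝ) + 1) ^ (2 * g - 2)) ∧
      (∀ k < g - 1, ∀ ε : ℝ, 0 < ε → HasDerivAt (D k) (D (k + 1) ε) ε) ∧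
      (∀ ε : ℝ, 0 < ε →
        D (g - 1) ε = (-1 : ℝ) ^ (g - 1) * (2 : ℝ) ^ ((1 : ℤ) - g) *
          (1 / (2 * Real.sqrt (π * ε)) - 1 / 2 +
            (1 / Real.sqrt (π * ε)) *
              ∑' n : ℕ, Real.exp (-((n : ℝ) + 1) ^ 2 / ε))) := by
  set m := 2*g-2 with hm
  refine ⟨fun k ε => (2 * π ^ 2) ^ ((1 : ℤ) - g) *
      ∑' n : ℕ, (-(π^2*((n:ℝ)+1)^2))^k *
        (Real.exp (-ε * π ^ 2 * ((n : ℝ) + 1) ^ 2) / ((n : ℝ) + 1) ^ m),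
      ?_, ?_, ?_⟩
  · funext ε
    simp
  · intro k hk ε hε
    apply HasDerivAt.const_mul
    have key : HasDerivAt
        (fun y => ∑' n : ℕ, (-(π^2*((n:ℝ)+1)^2))^k *
          (Real.exp (-y * π ^ 2 * ((n : ℝ) + 1) ^ 2) / ((n : ℝ) + 1) ^ m))
        (∑' n : ℕ, (-(π^2*((n:ℝ)+1)^2))^(k+1) *
          (Real.exp (-ε * π ^ 2 * ((n : ℝ) + 1) ^ 2) / ((n : ℝ) + 1) ^ m)) ε := by
      have h2 : 0 < ε/2 := by linarith
      refine hasDerivAt_tsum_of_isPreconnected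
        (g' := fun n y => (-(π^2*((n:ℝ)+1)^2))^(k+1) *
          (Real.exp (-y * π ^ 2 * ((n : ℝ) + 1) ^ 2) / ((n : ℝ) + 1) ^ m))
        (u := fun n : ℕ => (π^2*((n:ℝ)+1)^2)^(k+1) *
          (Real.exp (-(ε/2) * π ^ 2 * ((n : ℝ) + 1) ^ 2) / ((n : ℝ) + 1) ^ m))
        (t := Set.Ioi (ε/2))
        (aux_summable2 h2 (k+1) m) isOpen_Ioi isPreconnected_Ioi
        (y₀ := ε) ?_ ?_ ?_ ?_ ?_
      · -- HasDerivAt for each term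
        intro n y hy
        set a : ℝ := π^2*((n:ℝ)+1)^2 with ha
        have h1 : HasDerivAt (fun y : ℝ => -y * π ^ 2 * ((n : ℝ) + 1) ^ 2) (-a) y := by
          have := ((hasDerivAt_id y).neg.mul_const (π ^ 2)).mul_const (((n : ℝ) + 1) ^ 2)
          simpa [ha] using this
        have h2 := (Real.hasDerivAt_exp (-y * π ^ 2 * ((n : ℝ) + 1) ^ 2)).comp y h1
        have h3 := (h2.div_const (((n : ℝ) + 1) ^ m)).const_mul ((-a)^k)
        exact h3.congr_deriv (by rw [pow_succ]; ring)
      · -- bound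
        intro n y hy
        have hy' : ε/2 < y := hy
        have hb : (0:ℝ) < ((n:ℝ)+1)^m := by positivity
        have ha : (0:ℝ) ≤ π^2*((n:ℝ)+1)^2 := by positivity
        rw [norm_mul, norm_pow, norm_neg, Real.norm_of_nonneg ha, norm_div,
          Real.norm_of_nonneg (Real.exp_nonneg _), Real.norm_of_nonneg (le_of_lt hb)]
        apply mul_le_mul_of_nonneg_left _ (by positivity)
        rw [div_le_div_iff_of_pos_right hb]
        apply Real.exp_le_exp.2
        nlinarith [mul_le_mul_of_nonneg_right (le_of_lt hy') ha]
      · exact Set.mem_Ioi.2 (by linarith)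
      · exact ((aux_summable2 hε k m).mul_left ((-1:ℝ)^k)).congr fun n => by
          rw [neg_pow (π^2*((n:ℝ)+1)^2) k]; ring
      · exact Set.mem_Ioi.2 (by linarith)
    exact key
  · intro ε hε
    beta_reduce
    have hεπ : 0 < ε * π := by positivity
    have hπε : 0 < π * ε := by positivity
    -- the inner sums
    set S : ℝ := ∑' n : ℕ, Real.exp (-ε*π^2*((n:ℝ)+1)^2) with hS
    set S' : ℝ := ∑' n : ℕ, Real.exp (-((n:ℝ)+1)^2/ε) with hS'
    have hgm : 2 * (g - 1) = m := by omega
    -- simplify each term of the derivative series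
    have hterm : ∀ n : ℕ, (-(π^2*((n:ℝ)+1)^2))^(g-1) *
        (Real.exp (-ε*π^2*((n:ℝ)+1)^2) / ((n:ℝ)+1)^m)
        = ((-1:ℝ)^(g-1) * π^m) * Real.exp (-ε*π^2*((n:ℝ)+1)^2) := by
      intro n
      have hne : ((n:ℝ)+1) ≠ 0 := by positivity
      rw [neg_pow, mul_pow, ← pow_mul, ← pow_mul, hgm]
      field_simp
    have hsum1 : (∑' n : ℕ, (-(π^2*((n:ℝ)+1)^2))^(g-1) *
        (Real.exp (-ε * π ^ 2 * ((n : ℝ) + 1) ^ 2) / ((n : ℝ) + 1) ^ m))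
        = ((-1:ℝ)^(g-1) * π^m) * S := by
      rw [tsum_congr hterm, tsum_mul_left]
    rw [hsum1]
    -- constants
    have hconst : (2 * π ^ 2) ^ ((1 : ℤ) - g) * ((-1:ℝ)^(g-1) * π^m)
        = (-1:ℝ)^(g-1) * (2:ℝ)^((1:ℤ)-g) := by
      have hπ2 : (π:ℝ)^2 ≠ 0 := pow_ne_zero 2 pi_ne_zero
      have hπm : (π:ℝ)^m = ((π:ℝ)^2)^((g:ℤ)-1) := by
        rw [← hgm, pow_mul]
        rw [← zpow_natCast ((π:ℝ)^2) (g-1)]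
        congr 1
        omega
      rw [mul_zpow, hπm, mul_comm ((-1:ℝ)^(g-1)), ← mul_assoc, mul_assoc ((2:ℝ)^((1:ℤ)-g)),
        ← zpow_add₀ hπ2]
      have : (1 : ℤ) - g + ((g:ℤ) - 1) = 0 := by ring
      rw [this, zpow_zero, mul_one]
      ring
    rw [← mul_assoc, hconst, mul_assoc, mul_assoc]
    congr 1
    congr 1
    -- the theta transformation: S = 1/(2√(πε)) - 1/2 + (1/√(πε)) * S'
    have hsummbl : Summable fun n : ℕ => Real.exp (-ε*π^2*((n:ℝ)+1)^2) := by
      have hc : 0 < ε * π^2 := by positivity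
      refine (aux_summable hc 0 0).congr fun n => ?_
      simp only [pow_zero, one_mul, div_one]
      congr 1
      ring
    have hsummbl' : Summable fun n : ℕ => Real.exp (-((n:ℝ)+1)^2/ε) := by
      have hc : 0 < (1:ℝ)/ε := by positivity
      refine (aux_summable hc 0 0).congr fun n => ?_
      simp only [pow_zero, one_mul, div_one]
      congr 1
      field_simp
    have theta := Real.tsum_exp_neg_mul_int_sq hεπ
    -- rewrite the ℤ-sums as ℕ-sums
    have hZ1 : (∑' n : ℤ, Real.exp (-π * (ε*π) * (n:ℝ)^2)) = 2 * S + 1 := by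
      have heq : ∀ n : ℕ, Real.exp (-π * (ε*π) * (((n:ℤ)+1 : ℤ):ℝ)^2)
          = Real.exp (-ε*π^2*((n:ℝ)+1)^2) := by
        intro n; congr 1; push_cast; ring
      have heq' : ∀ n : ℕ, Real.exp (-π * (ε*π) * ((-((n:ℤ)+1) : ℤ):ℝ)^2)
          = Real.exp (-ε*π^2*((n:ℝ)+1)^2) := by
        intro n; congr 1; push_cast; ring
      have h1 : Summable fun n : ℕ => Real.exp (-π * (ε*π) * (((n:ℤ)+1 : ℤ):ℝ)^2) :=
        hsummbl.congr fun n => (heq n).symm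
      have h2 : Summable fun n : ℕ => Real.exp (-π * (ε*π) * ((-((n:ℤ)+1) : ℤ):ℝ)^2) :=
        hsummbl.congr fun n => (heq' n).symm
      rw [tsum_of_add_one_of_neg_add_one
        (f := fun n : ℤ => Real.exp (-π * (ε*π) * (n:ℝ)^2)) h1 h2]
      rw [tsum_congr heq, tsum_congr heq']
      rw [← hS]
      norm_num
      ring
    have hZ2 : (∑' n : ℤ, Real.exp (-π / (ε*π) * (n:ℝ)^2)) = 2 * S' + 1 := by
      have heq : ∀ n : ℕ, Real.exp (-π / (ε*π) * (((n:ℤ)+1 : ℤ):ℝ)^2)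
          = Real.exp (-((n:ℝ)+1)^2/ε) := by
        intro n; congr 1; push_cast; field_simp
      have heq' : ∀ n : ℕ, Real.exp (-π / (ε*π) * ((-((n:ℤ)+1) : ℤ):ℝ)^2)
          = Real.exp (-((n:ℝ)+1)^2/ε) := by
        intro n; congr 1; push_cast; field_simp
      have h1 : Summable fun n : ℕ => Real.exp (-π / (ε*π) * (((n:ℤ)+1 : ℤ):ℝ)^2) :=
        hsummbl'.congr fun n => (heq n).symm
      have h2 : Summable fun n : ℕ => Real.exp (-π / (ε*π) * ((-((n:ℤ)+1) : ℤ):ℝ)^2) :=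
        hsummbl'.congr fun n => (heq' n).symm
      rw [tsum_of_add_one_of_neg_add_one
        (f := fun n : ℤ => Real.exp (-π / (ε*π) * (n:ℝ)^2)) h1 h2]
      rw [tsum_congr heq, tsum_congr heq']
      rw [← hS']
      norm_num
      ring
    rw [hZ1, hZ2] at theta
    have hsqrt : ((ε*π) : ℝ) ^ ((1:ℝ)/2) = Real.sqrt (π * ε) := by
      rw [Real.sqrt_eq_rpow, mul_comm π ε]
    rw [hsqrt] at theta
    set c : ℝ := 1 / Real.sqrt (π * ε) with hc
    have : S = (c * (2 * S' + 1) - 1) / 2 := by linarith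
    rw [this]
    ring
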